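/- arXiv:1609.04884 — 2 statements merged into one kernel-verified Lean document; each statement's English description precedes it below -/
import Mathlib

section
/- Let T be a bounded operator on a complex Hilbert space H with closed range, and write T = [[A,B],[0,0]] with respect to H = R(T) ⊕ N(T*). Then R(T) + R(T*) = R(T) ⊕ R(B*), where the sum on the right is direct and orthogonal; consequently R(T) + R(T*) is closed if and only if R(B*) is closed. -/
open ContinuousLinearMap
open scoped InnerProductSpace

variable {H : Type*} [NormedAddCommGroup H] [InnerProductSpace ℂ H] [CompleteSpace H]

noncomputable def opB (T : H →L[ℂ] H) (K N : Submodule ℂ H) [CompleteSpace K] :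
    N →L[ℂ] K :=
  (K.orthogonalProjectionOnto) ∘L (T ∘L N.subtypeL)

lemma ker_adjoint_eq (T : H →L[ℂ] H) :
    LinearMap.ker (adjoint T : H →ₗ[ℂ] H) = (LinearMap.range (T : H →ₗ[ℂ] H))ᗮ := by
  ext x
  simp only [LinearMap.mem_ker, ContinuousLinearMap.coe_coe, Submodule.mem_orthogonal]
  constructor
  · rintro h u ⟨y, rfl⟩
    rw [ContinuousLinearMap.coe_coe, ← ContinuousLinearMap.adjoint_inner_right, h, inner_zero_right]
  · intro h
    refine ext_inner_left ℂ fun v => ?_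
    rw [inner_zero_right, ContinuousLinearMap.adjoint_inner_right]
    exact h _ ⟨v, rfl⟩

set_option maxHeartbeats 1000000 in
theorem stmt3 (T : H →L[ℂ] H) (hT : IsClosed (LinearMap.range (T : H →ₗ[ℂ] H) : Set H)) :
    haveI : CompleteSpace (LinearMap.range (T : H →ₗ[ℂ] H)) := hT.completeSpace_coe
    haveI : CompleteSpace (LinearMap.ker (adjoint T : H →ₗ[ℂ] H)) :=
      (ContinuousLinearMap.isClosed_ker (adjoint T) :
        IsClosed (LinearMap.ker (adjoint T : H →ₗ[ℂ] H) : Set H)).completeSpace_coe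
    (let B := opB T (LinearMap.range (T : H →ₗ[ℂ] H)) (LinearMap.ker (adjoint T : H →ₗ[ℂ] H))
     let RBs : Submodule ℂ H :=
       (LinearMap.range (adjoint B).toLinearMap).map
         (LinearMap.ker (adjoint T : H →ₗ[ℂ] H)).subtype
     LinearMap.range (T : H →ₗ[ℂ] H) ⊔ LinearMap.range (adjoint T : H →ₗ[ℂ] H) =
       LinearMap.range (T : H →ₗ[ℂ] H) ⊔ RBs ∧
       (∀ x ∈ LinearMap.range (T : H →ₗ[ℂ] H), ∀ y ∈ RBs, ⟪x, y⟫_ℂ = 0) ∧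
       (IsClosed ((LinearMap.range (T : H →ₗ[ℂ] H) ⊔ LinearMap.range (adjoint T : H →ₗ[ℂ] H) : Submodule ℂ H) : Set H) ↔
         IsClosed (RBs : Set H))) := by
  haveI : CompleteSpace (LinearMap.range (T : H →ₗ[ℂ] H)) := hT.completeSpace_coe
  haveI : CompleteSpace (LinearMap.ker (adjoint T : H →ₗ[ℂ] H)) :=
    (ContinuousLinearMap.isClosed_ker (adjoint T) :
      IsClosed (LinearMap.ker (adjoint T : H →ₗ[ℂ] H) : Set H)).completeSpace_coe
  set R : Submodule ℂ H := LinearMap.range (T : H →ₗ[ℂ] H) with hR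
  set N : Submodule ℂ H := LinearMap.ker (adjoint T : H →ₗ[ℂ] H) with hNdef
  have hN : N = Rᗮ := ker_adjoint_eq T
  set B := opB T R N with hB
  set RBs : Submodule ℂ H := (LinearMap.range (adjoint B).toLinearMap).map N.subtype with hRBs
  set P := R.orthogonalProjectionOnto with hP
  -- formula for adjoint B
  have hBadj : ∀ r : R, ((adjoint B r : N) : H)
      = adjoint T (r : H) - (P (adjoint T (r : H)) : H) := by
    intro r
    have h1 : adjoint B = (N.orthogonalProjectionOnto) ∘L ((adjoint T) ∘L R.subtypeL) := by
      rw [hB]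
      unfold opB
      rw [adjoint_comp, adjoint_comp, Submodule.adjoint_subtypeL,
        Submodule.adjoint_orthogonalProjectionOnto]
      rfl
    rw [h1]
    simp only [ContinuousLinearMap.coe_comp', Function.comp_apply, Submodule.coe_subtypeL',
      Submodule.coe_subtype]
    rw [Submodule.coe_orthogonalProjectionOnto_apply]
    exact Submodule.eq_starProjection_of_mem_orthogonal
      (by rw [hN]; exact Submodule.sub_starProjection_mem_orthogonal _)
      (by rw [sub_sub_cancel, hN]; exact R.le_orthogonal_orthogonal (P _).2)
  -- RBs membership characterization
  have hmem : ∀ y : H, y ∈ RBs ↔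
      ∃ r : R, adjoint T (r : H) - (P (adjoint T (r : H)) : H) = y := by
    intro y
    constructor
    · rintro ⟨n, ⟨r, rfl⟩, rfl⟩
      exact ⟨r, (hBadj r).symm⟩
    · rintro ⟨r, rfl⟩
      exact ⟨adjoint B r, ⟨r, rfl⟩, hBadj r⟩
  have hRBsN : RBs ≤ N := fun y hy => by
    rcases hy with ⟨n, _, rfl⟩; exact n.2
  have hRBsO : RBs ≤ Rᗮ := hN ▸ hRBsN
  -- sup equality
  have hsup : R ⊔ LinearMap.range (adjoint T : H →ₗ[ℂ] H) = R ⊔ RBs := by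
    apply le_antisymm
    · refine sup_le le_sup_left ?_
      rintro _ ⟨x, rfl⟩
      have hm : x - (P x : H) ∈ N := by
        rw [hN]; exact Submodule.sub_starProjection_mem_orthogonal x
      have h0 : adjoint T (x - (P x : H)) = 0 := hm
      rw [map_sub, sub_eq_zero] at h0
      refine Submodule.mem_sup.2 ⟨(P (adjoint T x) : H), (P (adjoint T x)).2,
        adjoint T x - (P (adjoint T x) : H), ?_, by abel⟩
      exact (hmem _).2 ⟨P x, by rw [← h0]⟩
    · refine sup_le le_sup_left ?_
      intro y hy
      rcases (hmem y).1 hy with ⟨r, rfl⟩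
      refine Submodule.mem_sup.2 ⟨-(P (adjoint T (r : H)) : H), neg_mem (P (adjoint T (r : H))).2,
        adjoint T (r : H), ⟨(r : H), rfl⟩, by abel⟩
  refine ⟨hsup, ?_, ?_⟩
  · intro x hx y hy
    exact (Submodule.mem_orthogonal R y).1 (hRBsO hy) x hx
  · rw [hsup]
    constructor
    · intro hc
      have hset : (RBs : Set H) = ((R ⊔ RBs : Submodule ℂ H) : Set H) ∩ (N : Set H) := by
        apply Set.Subset.antisymm
        · intro y hy
          exact ⟨le_sup_right (a := R) hy, hRBsN hy⟩
        · rintro x ⟨hx1, hx2⟩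
          rcases Submodule.mem_sup.1 hx1 with ⟨a, ha, b, hb, rfl⟩
          have hbN : b ∈ N := hRBsN hb
          have haN : a ∈ N := by
            have : a = (a + b) - b := by abel
            rw [this]; exact sub_mem hx2 hbN
          have ha0 : a = 0 := by
            rw [hN] at haN
            have := (Submodule.mem_orthogonal R a).1 haN a ha
            exact inner_self_eq_zero.1 this
          rw [ha0, zero_add]; exact hb
      rw [hset]
      exact hc.inter (ContinuousLinearMap.isClosed_ker (adjoint T))
    · intro hc
      set f : H →L[ℂ] H := ContinuousLinearMap.id ℂ H - R.subtypeL ∘L P with hf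
      have hset : ((R ⊔ RBs : Submodule ℂ H) : Set H) = f ⁻¹' (RBs : Set H) := by
        apply Set.Subset.antisymm
        · intro x hx
          rcases Submodule.mem_sup.1 hx with ⟨a, ha, b, hb, rfl⟩
          have hPa : (P a : H) = a := Submodule.starProjection_eq_self_iff.2 ha
          have hPb : P b = 0 :=
            Submodule.orthogonalProjectionOnto_apply_of_mem_orthogonal (hRBsO hb)
          have : f (a + b) = b := by
            simp only [hf, ContinuousLinearMap.sub_apply, ContinuousLinearMap.id_apply,
              ContinuousLinearMap.coe_comp', Function.comp_apply, Submodule.coe_subtypeL',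
              Submodule.coe_subtype, map_add, hPb]
            rw [hPa]
            simp
          simpa [Set.mem_preimage, this] using hb
        · intro x hx
          simp only [Set.mem_preimage, hf, ContinuousLinearMap.sub_apply,
            ContinuousLinearMap.id_apply, ContinuousLinearMap.coe_comp', Function.comp_apply,
            Submodule.coe_subtypeL', Submodule.coe_subtype, SetLike.mem_coe] at hx
          have : x = (P x : H) + (x - (P x : H)) := by abel
          rw [SetLike.mem_coe, this]
          exact Submodule.mem_sup.2 ⟨(P x : H), (P x).2, x - (P x : H), hx, rfl⟩
      rw [hset]
      exact hc.preimage f.continuous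
end

section
/- Let T be a bounded operator on a complex Hilbert space H with closed range such that T and T* coincide on R(T) ∩ R(T*). Then T maps R(T) ∩ R(T*) onto R(T) ∩ R(T*). -/
open ContinuousLinearMap

variable {H : Type*} [NormedAddCommGroup H] [InnerProductSpace ℂ H] [CompleteSpace H]

local notation "⟪" x ", " y "⟫" => @inner ℂ _ _ x y

/-- Bounded solvability: if `T` has closed range, every `x ∈ R(T)` has a preimage of
controlled norm. -/
lemma keyA (T : H →L[ℂ] H) (hT : IsClosed (LinearMap.range (T : H →ₗ[ℂ] H) : Set H)) :
    ∃ C > (0:ℝ), ∀ x ∈ LinearMap.range (T : H →ₗ[ℂ] H), ∃ z, T z = x ∧ ‖z‖ ≤ C * ‖x‖ := by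
  haveI : CompleteSpace ((LinearMap.ker (T : H →ₗ[ℂ] H))ᗮ : Submodule ℂ H) :=
    (Submodule.isClosed_orthogonal _).completeSpace_coe
  haveI : CompleteSpace (LinearMap.range (T : H →ₗ[ℂ] H)) := hT.completeSpace_coe
  haveI : CompleteSpace (LinearMap.ker (T : H →ₗ[ℂ] H)) := (ContinuousLinearMap.isClosed_ker T).completeSpace_coe
  set f : ((LinearMap.ker (T : H →ₗ[ℂ] H))ᗮ : Submodule ℂ H) →L[ℂ] LinearMap.range (T : H →ₗ[ℂ] H) :=
    (T.comp (LinearMap.ker (T : H →ₗ[ℂ] H))ᗮ.subtypeL).codRestrict (LinearMap.range (T : H →ₗ[ℂ] H))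
      (fun z => LinearMap.mem_range_self _ _) with hf
  have hker : LinearMap.ker (f : ((LinearMap.ker (T : H →ₗ[ℂ] H))ᗮ : Submodule ℂ H) →ₗ[ℂ] LinearMap.range (T : H →ₗ[ℂ] H)) = ⊥ := by
    rw [LinearMap.ker_eq_bot']
    intro z hz
    have h1 : T (z : H) = 0 := congrArg Subtype.val hz
    have h2 : (z : H) ∈ LinearMap.ker (T : H →ₗ[ℂ] H) ⊓ (LinearMap.ker (T : H →ₗ[ℂ] H))ᗮ :=
      ⟨h1, z.2⟩
    rw [Submodule.inf_orthogonal_eq_bot] at h2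
    exact Subtype.ext h2
  have hrange : LinearMap.range (f : ((LinearMap.ker (T : H →ₗ[ℂ] H))ᗮ : Submodule ℂ H) →ₗ[ℂ] LinearMap.range (T : H →ₗ[ℂ] H)) = ⊤ := by
    rw [LinearMap.range_eq_top]
    rintro ⟨y, v, rfl⟩
    obtain ⟨a, ha, b, hb, hv⟩ := (LinearMap.ker (T : H →ₗ[ℂ] H)).exists_add_mem_mem_orthogonal v
    refine ⟨⟨b, hb⟩, Subtype.ext ?_⟩
    show T b = T v
    rw [hv, map_add, (show T a = 0 from ha), zero_add]
  let e := ContinuousLinearEquiv.ofBijective f hker hrange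
  refine ⟨‖(e.symm : LinearMap.range (T : H →ₗ[ℂ] H) →L[ℂ] ((LinearMap.ker (T : H →ₗ[ℂ] H))ᗮ : Submodule ℂ H))‖ + 1,
    by positivity, ?_⟩
  intro x hx
  refine ⟨(e.symm ⟨x, hx⟩ : H), ?_, ?_⟩
  · have h1 : f (e.symm ⟨x, hx⟩) = ⟨x, hx⟩ := e.apply_symm_apply ⟨x, hx⟩
    exact congrArg Subtype.val h1
  · have h1 : ‖e.symm ⟨x, hx⟩‖ ≤
        ‖(e.symm : LinearMap.range (T : H →ₗ[ℂ] H) →L[ℂ] ((LinearMap.ker (T : H →ₗ[ℂ] H))ᗮ : Submodule ℂ H))‖ *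
          ‖(⟨x, hx⟩ : LinearMap.range (T : H →ₗ[ℂ] H))‖ :=
      (e.symm : LinearMap.range (T : H →ₗ[ℂ] H) →L[ℂ] ((LinearMap.ker (T : H →ₗ[ℂ] H))ᗮ : Submodule ℂ H)).le_opNorm _
    have h2 : ‖(⟨x, hx⟩ : LinearMap.range (T : H →ₗ[ℂ] H))‖ = ‖x‖ := rfl
    have h3 : ‖((e.symm ⟨x, hx⟩ : ((LinearMap.ker (T : H →ₗ[ℂ] H))ᗮ : Submodule ℂ H)) : H)‖
        = ‖e.symm ⟨x, hx⟩‖ := rfl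
    rw [h2] at h1
    rw [h3]
    nlinarith [norm_nonneg x]

/-- The adjoint is bounded below on the range of `T`. -/
lemma keyB (T : H →L[ℂ] H) (hT : IsClosed (LinearMap.range (T : H →ₗ[ℂ] H) : Set H)) :
    ∃ C > (0:ℝ), ∀ x ∈ LinearMap.range (T : H →ₗ[ℂ] H), ‖x‖ ≤ C * ‖adjoint T x‖ := by
  obtain ⟨C, hC, hA⟩ := keyA T hT
  refine ⟨C, hC, fun x hx => ?_⟩
  obtain ⟨z, hz, hzn⟩ := hA x hx
  have h1 : ⟪adjoint T x, z⟫ = ⟪x, x⟫ := by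
    rw [ContinuousLinearMap.adjoint_inner_left, hz]
  have h2 : ‖x‖ ^ 2 ≤ ‖adjoint T x‖ * ‖z‖ := by
    calc ‖x‖ ^ 2 = ‖⟪x, x⟫‖ := by
          rw [@inner_self_eq_norm_sq_to_K ℂ]; simp [pow_two]
      _ = ‖⟪adjoint T x, z⟫‖ := by rw [h1]
      _ ≤ ‖adjoint T x‖ * ‖z‖ := norm_inner_le_norm _ _
  rcases eq_or_ne x 0 with rfl | hx0
  · simp
  · have hxn : 0 < ‖x‖ := norm_pos_iff.mpr hx0
    nlinarith [norm_nonneg (adjoint T x)]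

/-- Closed range theorem (Hilbert space case). -/
lemma keyD (T : H →L[ℂ] H) (hT : IsClosed (LinearMap.range (T : H →ₗ[ℂ] H) : Set H)) :
    IsClosed (LinearMap.range (adjoint T : H →ₗ[ℂ] H) : Set H) := by
  obtain ⟨C, hC, hB⟩ := keyB T hT
  haveI : CompleteSpace (LinearMap.range (T : H →ₗ[ℂ] H)) := hT.completeSpace_coe
  set g : (LinearMap.range (T : H →ₗ[ℂ] H) : Submodule ℂ H) →L[ℂ] H :=
    (adjoint T).comp (LinearMap.range (T : H →ₗ[ℂ] H)).subtypeL with hg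
  have hanti : AntilipschitzWith (Real.toNNReal C) g := by
    apply g.antilipschitz_of_bound
    intro z
    have := hB (z : H) z.2
    rwa [Real.coe_toNNReal C hC.le]
  have hclo : IsClosed ((LinearMap.range (g : (LinearMap.range (T : H →ₗ[ℂ] H) : Submodule ℂ H) →ₗ[ℂ] H) : Submodule ℂ H) : Set H) := by
    rw [← closed_range_of_antilipschitz hanti]
    exact Submodule.isClosed_topologicalClosure _
  rw [LinearMap.coe_range] at hclo
  have heq : (LinearMap.range (adjoint T : H →ₗ[ℂ] H) : Set H) = Set.range g := by
    apply Set.Subset.antisymm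
    · rintro _ ⟨v, rfl⟩
      obtain ⟨p, hp, q, hq, hv⟩ := (LinearMap.range (T : H →ₗ[ℂ] H)).exists_add_mem_mem_orthogonal v
      have hq0 : adjoint T q = 0 := by
        have : ⟪adjoint T q, adjoint T q⟫ = 0 := by
          rw [ContinuousLinearMap.adjoint_inner_left]
          exact (Submodule.mem_orthogonal' _ q).mp hq _ (LinearMap.mem_range_self _ _)
        exact inner_self_eq_zero.mp this
      refine ⟨⟨p, hp⟩, ?_⟩
      show adjoint T p = adjoint T v
      rw [hv, map_add, hq0, add_zero]
    · rintro _ ⟨z, rfl⟩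
      exact LinearMap.mem_range_self _ _
  rw [heq]
  exact hclo

theorem stmt5 (T : H →L[ℂ] H) (hT : IsClosed (LinearMap.range (T : H →ₗ[ℂ] H) : Set H))
    (hCoR : ∀ x ∈ LinearMap.range (T : H →ₗ[ℂ] H) ⊓ LinearMap.range (adjoint T : H →ₗ[ℂ] H), T x = adjoint T x) :
    (LinearMap.range (T : H →ₗ[ℂ] H) ⊓ LinearMap.range (adjoint T : H →ₗ[ℂ] H)).map (T : H →ₗ[ℂ] H) =
      LinearMap.range (T : H →ₗ[ℂ] H) ⊓ LinearMap.range (adjoint T : H →ₗ[ℂ] H) := by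
  set M : Submodule ℂ H := LinearMap.range (T : H →ₗ[ℂ] H) ⊓ LinearMap.range (adjoint T : H →ₗ[ℂ] H) with hM
  obtain ⟨C, hC, hB⟩ := keyB T hT
  -- M is closed
  have hMclosed : IsClosed (M : Set H) := by
    have : (M : Set H) = (LinearMap.range (T : H →ₗ[ℂ] H) : Set H) ∩ (LinearMap.range (adjoint T : H →ₗ[ℂ] H) : Set H) := rfl
    rw [this]
    exact hT.inter (keyD T hT)
  haveI : CompleteSpace M := hMclosed.completeSpace_coe
  -- T maps M into M
  have hmaps : ∀ x ∈ M, T x ∈ M := by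
    intro x hx
    refine ⟨LinearMap.mem_range_self _ _, ?_⟩
    rw [hCoR x hx]
    exact LinearMap.mem_range_self _ _
  -- T is bounded below on M
  have hlow : ∀ x ∈ M, ‖x‖ ≤ C * ‖T x‖ := by
    intro x hx
    rw [hCoR x hx]
    exact hB x hx.1
  set N : Submodule ℂ H := M.map (T : H →ₗ[ℂ] H) with hN
  have hNM : N ≤ M := by
    rintro _ ⟨x, hx, rfl⟩
    exact hmaps x hx
  -- N is closed
  have hNclosed : IsClosed (N : Set H) := by
    set h : (M : Submodule ℂ H) →L[ℂ] H := T.comp M.subtypeL with hh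
    have hanti : AntilipschitzWith (Real.toNNReal C) h := by
      apply h.antilipschitz_of_bound
      intro z
      have := hlow (z : H) z.2
      rwa [Real.coe_toNNReal C hC.le]
    have hclo : IsClosed ((LinearMap.range (h : (M : Submodule ℂ H) →ₗ[ℂ] H) : Submodule ℂ H) : Set H) := by
      rw [← closed_range_of_antilipschitz hanti]
      exact Submodule.isClosed_topologicalClosure _
    rw [LinearMap.coe_range] at hclo
    have heq : (N : Set H) = Set.range h := by
      ext y
      constructor
      · rintro ⟨x, hx, rfl⟩
        exact ⟨⟨x, hx⟩, rfl⟩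
      · rintro ⟨z, rfl⟩
        exact ⟨(z : H), z.2, rfl⟩
    rw [heq]
    exact hclo
  haveI : CompleteSpace N := hNclosed.completeSpace_coe
  -- show N = M
  apply le_antisymm hNM
  intro y hy
  obtain ⟨a, ha, b, hb, hyab⟩ := N.exists_add_mem_mem_orthogonal y
  have hbM : b ∈ M := by
    have : b = y - a := by rw [hyab]; abel
    rw [this]
    exact M.sub_mem hy (hNM ha)
  -- show b = 0
  have hTb : adjoint T b = 0 := by
    have hw : adjoint T b ∈ M := by
      rw [← hCoR b hbM]
      exact hmaps b hbM
    have : ⟪adjoint T b, adjoint T b⟫ = 0 := by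
      rw [ContinuousLinearMap.adjoint_inner_left]
      have hTw : T (adjoint T b) ∈ N := ⟨adjoint T b, hw, rfl⟩
      have h0 : ⟪T (adjoint T b), b⟫ = 0 :=
        (Submodule.mem_orthogonal _ b).mp hb _ hTw
      rw [← inner_conj_symm, h0, map_zero]
    exact inner_self_eq_zero.mp this
  have hb0 : b = 0 := by
    have h1 : ‖b‖ ≤ C * ‖T b‖ := hlow b hbM
    rw [hCoR b hbM, hTb, norm_zero, mul_zero] at h1
    exact norm_le_zero_iff.mp h1
  rw [hyab, hb0, add_zero]
  exact ha
end
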